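/- Let X, Y, Z, U be discrete random variables such that U - (X,Y) - Z is a Markov chain and X - Y - Z is a Markov chain. Then I(X,Y; U | Z) = I(X,Y; U) - I(Z; U) \ge I(X; U | Y). -/

import Mathlib

open Finset

open Classical in
/-- Probability of an event under a pmf `p` on a finite sample space. -/
noncomputable def pr {Ω : Type*} [Fintype Ω] (p : Ω → ℝ) (E : Ω → Prop) : ℝ :=
  ∑ ω, if E ω then p ω else 0

/-- Shannon entropy (base 2) of a discrete random variable. -/
noncomputable def entH {Ω α : Type*} [Fintype Ω] [Fintype α] (p : Ω → ℝ) (X : Ω → α) : ℝ :=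
  -∑ x, pr p (fun ω => X ω = x) * Real.logb 2 (pr p (fun ω => X ω = x))

/-- Conditional Shannon entropy H(X|Y) (base 2). -/
noncomputable def condH {Ω α β : Type*} [Fintype Ω] [Fintype α] [Fintype β]
    (p : Ω → ℝ) (X : Ω → α) (Y : Ω → β) : ℝ :=
  -∑ x, ∑ y, pr p (fun ω => X ω = x ∧ Y ω = y) *
      Real.logb 2 (pr p (fun ω => X ω = x ∧ Y ω = y) / pr p (fun ω => Y ω = y))

/-- Mutual information I(X;Y) (base 2). -/
noncomputable def mutI {Ω α β : Type*} [Fintype Ω] [Fintype α] [Fintype β]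
    (p : Ω → ℝ) (X : Ω → α) (Y : Ω → β) : ℝ :=
  ∑ x, ∑ y, pr p (fun ω => X ω = x ∧ Y ω = y) *
      Real.logb 2 (pr p (fun ω => X ω = x ∧ Y ω = y) /
        (pr p (fun ω => X ω = x) * pr p (fun ω => Y ω = y)))

/-- Conditional mutual information I(X;Y|Z) (base 2). -/
noncomputable def condMI {Ω α β γ : Type*} [Fintype Ω] [Fintype α] [Fintype β] [Fintype γ]
    (p : Ω → ℝ) (X : Ω → α) (Y : Ω → β) (Z : Ω → γ) : ℝ :=
  ∑ x, ∑ y, ∑ z,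
    pr p (fun ω => X ω = x ∧ Y ω = y ∧ Z ω = z) *
      Real.logb 2
        ((pr p (fun ω => X ω = x ∧ Y ω = y ∧ Z ω = z) * pr p (fun ω => Z ω = z)) /
          (pr p (fun ω => X ω = x ∧ Z ω = z) * pr p (fun ω => Y ω = y ∧ Z ω = z)))

section helpers
variable {Ω V : Type*} [Fintype Ω] [Fintype V] {p : Ω → ℝ}

lemma pr_nonneg (hp : ∀ ω, 0 ≤ p ω) (E : Ω → Prop) : 0 ≤ pr p E := by
  classical
  refine Finset.sum_nonneg fun ω _ => ?_
  by_cases h : E ω <;> simp [h, hp ω]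

lemma pr_congr {E F : Ω → Prop} (h : ∀ ω, E ω ↔ F ω) : pr p E = pr p F := by
  classical
  unfold pr
  exact Finset.sum_congr rfl fun ω _ => by rw [if_congr (h ω) rfl rfl]

lemma pr_mono (hp : ∀ ω, 0 ≤ p ω) {E F : Ω → Prop} (h : ∀ ω, E ω → F ω) :
    pr p E ≤ pr p F := by
  classical
  refine Finset.sum_le_sum fun ω _ => ?_
  by_cases hE : E ω
  · simp [hE, h ω hE]
  · by_cases hF : F ω <;> simp [hE, hF, hp ω]

lemma pr_total (hsum : ∑ ω, p ω = 1) : pr p (fun _ => True) = 1 := by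
  classical
  simpa [pr] using hsum

lemma pr_split (p : Ω → ℝ) (E : Ω → Prop) (W : Ω → V) :
    pr p E = ∑ v, pr p (fun ω => E ω ∧ W ω = v) := by
  classical
  unfold pr
  rw [Finset.sum_comm]
  refine Finset.sum_congr rfl fun ω _ => ?_
  by_cases h : E ω
  · simp [h]
  · simp [h]

lemma pr_pos (hp : ∀ ω, 0 ≤ p ω) {E F : Ω → Prop} (h : ∀ ω, E ω → F ω)
    (hE : 0 < pr p E) : 0 < pr p F :=
  lt_of_lt_of_le hE (pr_mono hp h)

lemma logb_ge {x : ℝ} (hx : 0 < x) : (1 - 1/x) / Real.log 2 ≤ Real.logb 2 x := by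
  have h := Real.log_le_sub_one_of_pos (inv_pos.mpr hx)
  rw [Real.log_inv] at h
  have h2 : (0:ℝ) < Real.log 2 := Real.log_pos (by norm_num)
  have h3 : 1 - 1/x ≤ Real.log x := by rw [one_div]; linarith
  rw [Real.logb]
  gcongr

lemma sum3_reorder {α β γ : Type*} [Fintype α] [Fintype β] [Fintype γ]
    (f : α → β → γ → ℝ) :
    ∑ c : γ, ∑ b : β, ∑ a : α, f a b c = ∑ a, ∑ b, ∑ c, f a b c :=
  calc ∑ c : γ, ∑ b : β, ∑ a : α, f a b c
      = ∑ c : γ, ∑ a : α, ∑ b : β, f a b c :=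
        Finset.sum_congr rfl fun _ _ => Finset.sum_comm
    _ = ∑ a, ∑ c, ∑ b, f a b c := Finset.sum_comm
    _ = ∑ a, ∑ b, ∑ c, f a b c := Finset.sum_congr rfl fun _ _ => Finset.sum_comm

lemma sum3_cycle {α β γ : Type*} [Fintype α] [Fintype β] [Fintype γ]
    (f : α → β → γ → ℝ) :
    ∑ b : β, ∑ c : γ, ∑ a : α, f a b c = ∑ a, ∑ b, ∑ c, f a b c :=
  calc ∑ b : β, ∑ c : γ, ∑ a : α, f a b c
      = ∑ b : β, ∑ a : α, ∑ c : γ, f a b c :=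
        Finset.sum_congr rfl fun _ _ => Finset.sum_comm
    _ = ∑ a, ∑ b, ∑ c, f a b c := Finset.sum_comm

lemma sum4_reorder {α β γ δ : Type*} [Fintype α] [Fintype β] [Fintype γ] [Fintype δ]
    (f : α → β → γ → δ → ℝ) :
    ∑ z : δ, ∑ u : γ, ∑ x : α, ∑ y : β, f x y u z =
      ∑ x, ∑ y, ∑ u, ∑ z, f x y u z :=
  calc ∑ z : δ, ∑ u : γ, ∑ x : α, ∑ y : β, f x y u z
      = ∑ z : δ, ∑ x : α, ∑ u : γ, ∑ y : β, f x y u z :=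
        Finset.sum_congr rfl fun _ _ => Finset.sum_comm
    _ = ∑ x, ∑ z, ∑ u, ∑ y, f x y u z := Finset.sum_comm
    _ = ∑ x, ∑ z, ∑ y, ∑ u, f x y u z :=
        Finset.sum_congr rfl fun _ _ => Finset.sum_congr rfl fun _ _ => Finset.sum_comm
    _ = ∑ x, ∑ y, ∑ z, ∑ u, f x y u z :=
        Finset.sum_congr rfl fun _ _ => Finset.sum_comm
    _ = ∑ x, ∑ y, ∑ u, ∑ z, f x y u z :=
        Finset.sum_congr rfl fun _ _ => Finset.sum_congr rfl fun _ _ => Finset.sum_comm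

end helpers

section expand
variable {Ω 𝒳 𝒴 𝒵 𝒰 : Type*} [Fintype Ω] [Fintype 𝒳] [Fintype 𝒴] [Fintype 𝒵] [Fintype 𝒰]
variable (p : Ω → ℝ) (X : Ω → 𝒳) (Y : Ω → 𝒴) (Z : Ω → 𝒵) (U : Ω → 𝒰)

lemma expand_condMI_pair :
    condMI p (fun ω => (X ω, Y ω)) U Z =
      ∑ x, ∑ y, ∑ u, ∑ z,
        pr p (fun ω => X ω = x ∧ Y ω = y ∧ U ω = u ∧ Z ω = z) *
          Real.logb 2
            ((pr p (fun ω => X ω = x ∧ Y ω = y ∧ U ω = u ∧ Z ω = z) *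
                pr p (fun ω => Z ω = z)) /
              (pr p (fun ω => X ω = x ∧ Y ω = y ∧ Z ω = z) *
                pr p (fun ω => U ω = u ∧ Z ω = z))) := by
  unfold condMI
  rw [Fintype.sum_prod_type]
  simp only [Prod.mk.injEq, and_assoc]

lemma expand_mutI_pair :
    mutI p (fun ω => (X ω, Y ω)) U =
      ∑ x, ∑ y, ∑ u, ∑ z,
        pr p (fun ω => X ω = x ∧ Y ω = y ∧ U ω = u ∧ Z ω = z) *
          Real.logb 2
            (pr p (fun ω => X ω = x ∧ Y ω = y ∧ U ω = u) /
              (pr p (fun ω => X ω = x ∧ Y ω = y) * pr p (fun ω => U ω = u))) := by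
  unfold mutI
  rw [Fintype.sum_prod_type]
  simp only [Prod.mk.injEq, and_assoc]
  refine Finset.sum_congr rfl fun x _ => Finset.sum_congr rfl fun y _ =>
    Finset.sum_congr rfl fun u _ => ?_
  nth_rewrite 1 [pr_split p (fun ω => X ω = x ∧ Y ω = y ∧ U ω = u) Z]
  rw [Finset.sum_mul]
  simp only [and_assoc]

lemma expand_mutI_ZU_quad :
    mutI p Z U =
      ∑ x : 𝒳, ∑ y : 𝒴, ∑ u, ∑ z,
        pr p (fun ω => X ω = x ∧ Y ω = y ∧ U ω = u ∧ Z ω = z) *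
          Real.logb 2
            (pr p (fun ω => U ω = u ∧ Z ω = z) /
              (pr p (fun ω => Z ω = z) * pr p (fun ω => U ω = u))) := by
  unfold mutI
  have hc : ∀ z u, (pr p fun ω => Z ω = z ∧ U ω = u) = pr p fun ω => U ω = u ∧ Z ω = z :=
    fun z u => pr_congr fun ω => and_comm
  simp only [hc]
  have hs : ∀ z u, (pr p fun ω => U ω = u ∧ Z ω = z) =
      ∑ x, ∑ y, pr p (fun ω => X ω = x ∧ Y ω = y ∧ U ω = u ∧ Z ω = z) := by
    intro z u
    rw [pr_split p _ (fun ω => (X ω, Y ω)), Fintype.sum_prod_type]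
    refine Finset.sum_congr rfl fun x _ => Finset.sum_congr rfl fun y _ => pr_congr fun ω => ?_
    simp only [Prod.mk.injEq]
    tauto
  rw [← sum4_reorder (fun x y u z =>
    pr p (fun ω => X ω = x ∧ Y ω = y ∧ U ω = u ∧ Z ω = z) *
      Real.logb 2 (pr p (fun ω => U ω = u ∧ Z ω = z) /
        (pr p (fun ω => Z ω = z) * pr p (fun ω => U ω = u))))]
  refine Finset.sum_congr rfl fun z _ => Finset.sum_congr rfl fun u _ => ?_
  nth_rewrite 1 [hs z u]
  rw [Finset.sum_mul]
  exact Finset.sum_congr rfl fun x _ => Finset.sum_mul ..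

lemma expand_mutI_YU_triple :
    mutI p Y U =
      ∑ x : 𝒳, ∑ y, ∑ u,
        pr p (fun ω => X ω = x ∧ Y ω = y ∧ U ω = u) *
          Real.logb 2
            (pr p (fun ω => Y ω = y ∧ U ω = u) /
              (pr p (fun ω => Y ω = y) * pr p (fun ω => U ω = u))) := by
  unfold mutI
  rw [← sum3_cycle (fun x y u =>
    pr p (fun ω => X ω = x ∧ Y ω = y ∧ U ω = u) *
      Real.logb 2 (pr p (fun ω => Y ω = y ∧ U ω = u) /
        (pr p (fun ω => Y ω = y) * pr p (fun ω => U ω = u))))]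
  refine Finset.sum_congr rfl fun y _ => Finset.sum_congr rfl fun u _ => ?_
  nth_rewrite 1 [pr_split p (fun ω => Y ω = y ∧ U ω = u) X]
  rw [Finset.sum_mul]
  refine Finset.sum_congr rfl fun x _ => ?_
  congr 1
  exact pr_congr fun ω => by tauto

lemma expand_condMI_XUY :
    condMI p X U Y =
      ∑ x, ∑ y, ∑ u,
        pr p (fun ω => X ω = x ∧ Y ω = y ∧ U ω = u) *
          Real.logb 2
            ((pr p (fun ω => X ω = x ∧ Y ω = y ∧ U ω = u) * pr p (fun ω => Y ω = y)) /
              (pr p (fun ω => X ω = x ∧ Y ω = y) * pr p (fun ω => Y ω = y ∧ U ω = u))) := by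
  unfold condMI
  have h1 : ∀ x u y, (pr p fun ω => X ω = x ∧ U ω = u ∧ Y ω = y) =
      pr p fun ω => X ω = x ∧ Y ω = y ∧ U ω = u := fun x u y => pr_congr fun ω => by tauto
  have h2 : ∀ u y, (pr p fun ω => U ω = u ∧ Y ω = y) =
      pr p fun ω => Y ω = y ∧ U ω = u := fun u y => pr_congr fun ω => and_comm
  simp only [h1, h2]
  exact Finset.sum_congr rfl fun x _ => Finset.sum_comm

lemma expand_mutI_YU_z :
    mutI p Y U =
      ∑ y, ∑ u, ∑ z,
        pr p (fun ω => Y ω = y ∧ U ω = u ∧ Z ω = z) *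
          Real.logb 2
            (pr p (fun ω => Y ω = y ∧ U ω = u) /
              (pr p (fun ω => Y ω = y) * pr p (fun ω => U ω = u))) := by
  unfold mutI
  refine Finset.sum_congr rfl fun y _ => Finset.sum_congr rfl fun u _ => ?_
  nth_rewrite 1 [pr_split p (fun ω => Y ω = y ∧ U ω = u) Z]
  rw [Finset.sum_mul]
  simp only [and_assoc]

lemma expand_mutI_ZU_y :
    mutI p Z U =
      ∑ y : 𝒴, ∑ u, ∑ z,
        pr p (fun ω => Y ω = y ∧ U ω = u ∧ Z ω = z) *
          Real.logb 2
            (pr p (fun ω => U ω = u ∧ Z ω = z) /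
              (pr p (fun ω => Z ω = z) * pr p (fun ω => U ω = u))) := by
  unfold mutI
  have hc : ∀ z u, (pr p fun ω => Z ω = z ∧ U ω = u) = pr p fun ω => U ω = u ∧ Z ω = z :=
    fun z u => pr_congr fun ω => and_comm
  simp only [hc]
  rw [← sum3_reorder (fun y u z =>
    pr p (fun ω => Y ω = y ∧ U ω = u ∧ Z ω = z) *
      Real.logb 2 (pr p (fun ω => U ω = u ∧ Z ω = z) /
        (pr p (fun ω => Z ω = z) * pr p (fun ω => U ω = u))))]
  refine Finset.sum_congr rfl fun z _ => Finset.sum_congr rfl fun u _ => ?_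
  nth_rewrite 1 [pr_split p (fun ω => U ω = u ∧ Z ω = z) Y]
  rw [Finset.sum_mul]
  refine Finset.sum_congr rfl fun y _ => ?_
  congr 1
  exact pr_congr fun ω => by tauto

end expand

section pointwise
variable {Ω 𝒳 𝒴 𝒵 𝒰 : Type*} [Fintype Ω] [Fintype 𝒳] [Fintype 𝒴] [Fintype 𝒵] [Fintype 𝒰]
variable {p : Ω → ℝ} (X : Ω → 𝒳) (Y : Ω → 𝒴) (Z : Ω → 𝒵) (U : Ω → 𝒰)

lemma expand_mutI_pair3 (p : Ω → ℝ) :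
    mutI p (fun ω => (X ω, Y ω)) U =
      ∑ x, ∑ y, ∑ u,
        pr p (fun ω => X ω = x ∧ Y ω = y ∧ U ω = u) *
          Real.logb 2
            (pr p (fun ω => X ω = x ∧ Y ω = y ∧ U ω = u) /
              (pr p (fun ω => X ω = x ∧ Y ω = y) * pr p (fun ω => U ω = u))) := by
  unfold mutI
  rw [Fintype.sum_prod_type]
  simp only [Prod.mk.injEq, and_assoc]

lemma pointwise1 (hp : ∀ ω, 0 ≤ p ω) (x : 𝒳) (y : 𝒴) (u : 𝒰) (z : 𝒵)
    (hM : pr p (fun ω => X ω = x ∧ Y ω = y ∧ U ω = u ∧ Z ω = z) *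
        pr p (fun ω => X ω = x ∧ Y ω = y) =
      pr p (fun ω => X ω = x ∧ Y ω = y ∧ U ω = u) *
        pr p (fun ω => X ω = x ∧ Y ω = y ∧ Z ω = z)) :
    pr p (fun ω => X ω = x ∧ Y ω = y ∧ U ω = u ∧ Z ω = z) *
        Real.logb 2
          ((pr p (fun ω => X ω = x ∧ Y ω = y ∧ U ω = u ∧ Z ω = z) *
              pr p (fun ω => Z ω = z)) /
            (pr p (fun ω => X ω = x ∧ Y ω = y ∧ Z ω = z) *
              pr p (fun ω => U ω = u ∧ Z ω = z))) +
      pr p (fun ω => X ω = x ∧ Y ω = y ∧ U ω = u ∧ Z ω = z) *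
        Real.logb 2
          (pr p (fun ω => U ω = u ∧ Z ω = z) /
            (pr p (fun ω => Z ω = z) * pr p (fun ω => U ω = u))) =
    pr p (fun ω => X ω = x ∧ Y ω = y ∧ U ω = u ∧ Z ω = z) *
      Real.logb 2
        (pr p (fun ω => X ω = x ∧ Y ω = y ∧ U ω = u) /
          (pr p (fun ω => X ω = x ∧ Y ω = y) * pr p (fun ω => U ω = u))) := by
  rcases eq_or_lt_of_le (pr_nonneg hp (fun ω => X ω = x ∧ Y ω = y ∧ U ω = u ∧ Z ω = z))
    with h0 | hpos
  · rw [← h0]; ring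
  · have hZ : 0 < pr p (fun ω => Z ω = z) := pr_pos hp (fun ω h => h.2.2.2) hpos
    have hXYZ : 0 < pr p (fun ω => X ω = x ∧ Y ω = y ∧ Z ω = z) :=
      pr_pos hp (fun ω h => ⟨h.1, h.2.1, h.2.2.2⟩) hpos
    have hUZ : 0 < pr p (fun ω => U ω = u ∧ Z ω = z) :=
      pr_pos hp (fun ω h => ⟨h.2.2.1, h.2.2.2⟩) hpos
    have hU : 0 < pr p (fun ω => U ω = u) := pr_pos hp (fun ω h => h.2.2.1) hpos
    have hXYU : 0 < pr p (fun ω => X ω = x ∧ Y ω = y ∧ U ω = u) :=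
      pr_pos hp (fun ω h => ⟨h.1, h.2.1, h.2.2.1⟩) hpos
    have hXY : 0 < pr p (fun ω => X ω = x ∧ Y ω = y) :=
      pr_pos hp (fun ω h => ⟨h.1, h.2.1⟩) hpos
    rw [← mul_add]
    congr 1
    rw [← Real.logb_mul (by positivity) (by positivity)]
    congr 1
    field_simp
    linear_combination hM

lemma pointwise_chain (hp : ∀ ω, 0 ≤ p ω) (x : 𝒳) (y : 𝒴) (u : 𝒰) :
    pr p (fun ω => X ω = x ∧ Y ω = y ∧ U ω = u) *
        Real.logb 2
          ((pr p (fun ω => X ω = x ∧ Y ω = y ∧ U ω = u) * pr p (fun ω => Y ω = y)) /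
            (pr p (fun ω => X ω = x ∧ Y ω = y) * pr p (fun ω => Y ω = y ∧ U ω = u))) +
      pr p (fun ω => X ω = x ∧ Y ω = y ∧ U ω = u) *
        Real.logb 2
          (pr p (fun ω => Y ω = y ∧ U ω = u) /
            (pr p (fun ω => Y ω = y) * pr p (fun ω => U ω = u))) =
    pr p (fun ω => X ω = x ∧ Y ω = y ∧ U ω = u) *
      Real.logb 2
        (pr p (fun ω => X ω = x ∧ Y ω = y ∧ U ω = u) /
          (pr p (fun ω => X ω = x ∧ Y ω = y) * pr p (fun ω => U ω = u))) := by
  rcases eq_or_lt_of_le (pr_nonneg hp (fun ω => X ω = x ∧ Y ω = y ∧ U ω = u)) with h0 | hpos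
  · rw [← h0]; ring
  · have hY : 0 < pr p (fun ω => Y ω = y) := pr_pos hp (fun ω h => h.2.1) hpos
    have hU : 0 < pr p (fun ω => U ω = u) := pr_pos hp (fun ω h => h.2.2) hpos
    have hXY : 0 < pr p (fun ω => X ω = x ∧ Y ω = y) :=
      pr_pos hp (fun ω h => ⟨h.1, h.2.1⟩) hpos
    have hYU : 0 < pr p (fun ω => Y ω = y ∧ U ω = u) :=
      pr_pos hp (fun ω h => ⟨h.2.1, h.2.2⟩) hpos
    rw [← mul_add]
    congr 1
    rw [← Real.logb_mul (by positivity) (by positivity)]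
    congr 1
    field_simp

lemma pointwise_dpi (hp : ∀ ω, 0 ≤ p ω) (y : 𝒴) (u : 𝒰) (z : 𝒵)
    (hM : pr p (fun ω => Y ω = y ∧ U ω = u ∧ Z ω = z) * pr p (fun ω => Y ω = y) =
      pr p (fun ω => Y ω = y ∧ U ω = u) * pr p (fun ω => Y ω = y ∧ Z ω = z)) :
    (pr p (fun ω => Y ω = y ∧ U ω = u ∧ Z ω = z) -
        pr p (fun ω => Y ω = y ∧ Z ω = z) * pr p (fun ω => U ω = u ∧ Z ω = z) /
          pr p (fun ω => Z ω = z)) / Real.log 2 ≤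
      pr p (fun ω => Y ω = y ∧ U ω = u ∧ Z ω = z) *
          Real.logb 2
            (pr p (fun ω => Y ω = y ∧ U ω = u) /
              (pr p (fun ω => Y ω = y) * pr p (fun ω => U ω = u))) -
        pr p (fun ω => Y ω = y ∧ U ω = u ∧ Z ω = z) *
          Real.logb 2
            (pr p (fun ω => U ω = u ∧ Z ω = z) /
              (pr p (fun ω => Z ω = z) * pr p (fun ω => U ω = u))) := by
  have hlog2 : (0:ℝ) < Real.log 2 := Real.log_pos (by norm_num)
  rcases eq_or_lt_of_le (pr_nonneg hp (fun ω => Y ω = y ∧ U ω = u ∧ Z ω = z)) with h0 | hpos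
  · rw [← h0]
    simp only [zero_mul, sub_zero, zero_sub]
    apply div_nonpos_of_nonpos_of_nonneg _ (le_of_lt hlog2)
    simp only [neg_nonpos]
    apply div_nonneg (mul_nonneg (pr_nonneg hp _) (pr_nonneg hp _)) (pr_nonneg hp _)
  · have hY : 0 < pr p (fun ω => Y ω = y) := pr_pos hp (fun ω h => h.1) hpos
    have hU : 0 < pr p (fun ω => U ω = u) := pr_pos hp (fun ω h => h.2.1) hpos
    have hZ : 0 < pr p (fun ω => Z ω = z) := pr_pos hp (fun ω h => h.2.2) hpos
    have hYU : 0 < pr p (fun ω => Y ω = y ∧ U ω = u) :=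
      pr_pos hp (fun ω h => ⟨h.1, h.2.1⟩) hpos
    have hUZ : 0 < pr p (fun ω => U ω = u ∧ Z ω = z) :=
      pr_pos hp (fun ω h => ⟨h.2.1, h.2.2⟩) hpos
    have hYZ : 0 < pr p (fun ω => Y ω = y ∧ Z ω = z) :=
      pr_pos hp (fun ω h => ⟨h.1, h.2.2⟩) hpos
    set a := pr p (fun ω => Y ω = y ∧ U ω = u ∧ Z ω = z) with ha
    set bYU := pr p (fun ω => Y ω = y ∧ U ω = u) with hbYU
    set bY := pr p (fun ω => Y ω = y) with hbY
    set bU := pr p (fun ω => U ω = u) with hbU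
    set bZ := pr p (fun ω => Z ω = z) with hbZ
    set bUZ := pr p (fun ω => U ω = u ∧ Z ω = z) with hbUZ
    set bYZ := pr p (fun ω => Y ω = y ∧ Z ω = z) with hbYZ
    have hr : 0 < (bYU * bZ) / (bY * bUZ) := by positivity
    have hlog : Real.logb 2 (bYU / (bY * bU)) - Real.logb 2 (bUZ / (bZ * bU)) =
        Real.logb 2 ((bYU * bZ) / (bY * bUZ)) := by
      rw [← Real.logb_div (by positivity) (by positivity)]
      congr 1
      field_simp
    have key : a * (1 - 1 / ((bYU * bZ) / (bY * bUZ))) = a - bYZ * bUZ / bZ := by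
      field_simp
      linear_combination (-bUZ) * hM
    calc (a - bYZ * bUZ / bZ) / Real.log 2
        = a * ((1 - 1 / ((bYU * bZ) / (bY * bUZ))) / Real.log 2) := by
          rw [← key]; ring
      _ ≤ a * Real.logb 2 ((bYU * bZ) / (bY * bUZ)) :=
          mul_le_mul_of_nonneg_left (logb_ge hr) (le_of_lt hpos)
      _ = a * Real.logb 2 (bYU / (bY * bU)) - a * Real.logb 2 (bUZ / (bZ * bU)) := by
          rw [← mul_sub, hlog]

end pointwise

section derive
variable {Ω 𝒳 𝒴 𝒵 𝒰 : Type*} [Fintype Ω] [Fintype 𝒳] [Fintype 𝒴] [Fintype 𝒵] [Fintype 𝒰]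
variable {p : Ω → ℝ} (X : Ω → 𝒳) (Y : Ω → 𝒴) (Z : Ω → 𝒵) (U : Ω → 𝒰)

lemma sum_pr_eq_one {V : Type*} [Fintype V] (hsum : ∑ ω, p ω = 1) (W : Ω → V) :
    ∑ v, pr p (fun ω => W ω = v) = 1 := by
  rw [← pr_total hsum, pr_split p (fun _ => True) W]
  exact Finset.sum_congr rfl fun v _ => pr_congr fun ω => by simp

lemma sum_one3 (hsum : ∑ ω, p ω = 1) :
    ∑ y, ∑ u, ∑ z, pr p (fun ω => Y ω = y ∧ U ω = u ∧ Z ω = z) = 1 := by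
  have c1 : ∀ y u, (pr p fun ω => Y ω = y ∧ U ω = u) =
      ∑ z, pr p (fun ω => Y ω = y ∧ U ω = u ∧ Z ω = z) := by
    intro y u
    rw [pr_split p _ Z]
    exact Finset.sum_congr rfl fun z _ => pr_congr fun ω => and_assoc
  have c2 : ∀ y, (pr p fun ω => Y ω = y) =
      ∑ u, pr p (fun ω => Y ω = y ∧ U ω = u) := fun y => pr_split p _ U
  simp only [← c1, ← c2]
  exact sum_pr_eq_one hsum Y

lemma sum_ratio (hp : ∀ ω, 0 ≤ p ω) (hsum : ∑ ω, p ω = 1) :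
    ∑ y, ∑ u, ∑ z, pr p (fun ω => Y ω = y ∧ Z ω = z) *
      pr p (fun ω => U ω = u ∧ Z ω = z) / pr p (fun ω => Z ω = z) = 1 := by
  rw [← sum3_reorder (fun y u z => pr p (fun ω => Y ω = y ∧ Z ω = z) *
      pr p (fun ω => U ω = u ∧ Z ω = z) / pr p (fun ω => Z ω = z))]
  have hZy : ∀ z, ∑ y, pr p (fun ω => Y ω = y ∧ Z ω = z) = pr p (fun ω => Z ω = z) := by
    intro z
    rw [pr_split p (fun ω => Z ω = z) Y]
    exact Finset.sum_congr rfl fun y _ => pr_congr fun ω => and_comm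
  have hZu : ∀ z, ∑ u, pr p (fun ω => U ω = u ∧ Z ω = z) = pr p (fun ω => Z ω = z) := by
    intro z
    rw [pr_split p (fun ω => Z ω = z) U]
    exact Finset.sum_congr rfl fun u _ => pr_congr fun ω => and_comm
  have hz : ∀ z, ∑ u, ∑ y, pr p (fun ω => Y ω = y ∧ Z ω = z) *
      pr p (fun ω => U ω = u ∧ Z ω = z) / pr p (fun ω => Z ω = z) =
      pr p (fun ω => Z ω = z) := by
    intro z
    calc ∑ u, ∑ y, pr p (fun ω => Y ω = y ∧ Z ω = z) *
          pr p (fun ω => U ω = u ∧ Z ω = z) / pr p (fun ω => Z ω = z)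
        = ∑ u, (∑ y, pr p (fun ω => Y ω = y ∧ Z ω = z)) *
            pr p (fun ω => U ω = u ∧ Z ω = z) / pr p (fun ω => Z ω = z) := by
          exact Finset.sum_congr rfl fun u _ => by
            rw [← Finset.sum_div, ← Finset.sum_mul]
      _ = ∑ u, pr p (fun ω => Z ω = z) *
            pr p (fun ω => U ω = u ∧ Z ω = z) / pr p (fun ω => Z ω = z) := by
          rw [hZy z]
      _ = pr p (fun ω => Z ω = z) * (∑ u, pr p (fun ω => U ω = u ∧ Z ω = z)) /
            pr p (fun ω => Z ω = z) := by
          rw [← Finset.sum_div, ← Finset.mul_sum]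
      _ = pr p (fun ω => Z ω = z) * pr p (fun ω => Z ω = z) / pr p (fun ω => Z ω = z) := by
          rw [hZu z]
      _ = pr p (fun ω => Z ω = z) := by
          rcases eq_or_ne (pr p (fun ω => Z ω = z)) 0 with h | h
          · simp [h]
          · field_simp
  simp only [hz]
  exact sum_pr_eq_one hsum Z

lemma markov_derive (hp : ∀ ω, 0 ≤ p ω)
    (hMU : ∀ x y u z,
      pr p (fun ω => X ω = x ∧ Y ω = y ∧ U ω = u ∧ Z ω = z) *
        pr p (fun ω => X ω = x ∧ Y ω = y) =
      pr p (fun ω => X ω = x ∧ Y ω = y ∧ U ω = u) *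
        pr p (fun ω => X ω = x ∧ Y ω = y ∧ Z ω = z))
    (hMX : ∀ x y z,
      pr p (fun ω => X ω = x ∧ Y ω = y ∧ Z ω = z) * pr p (fun ω => Y ω = y) =
      pr p (fun ω => X ω = x ∧ Y ω = y) * pr p (fun ω => Y ω = y ∧ Z ω = z))
    (y : 𝒴) (u : 𝒰) (z : 𝒵) :
    pr p (fun ω => Y ω = y ∧ U ω = u ∧ Z ω = z) * pr p (fun ω => Y ω = y) =
      pr p (fun ω => Y ω = y ∧ U ω = u) * pr p (fun ω => Y ω = y ∧ Z ω = z) := by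
  have step : ∀ x,
      pr p (fun ω => X ω = x ∧ Y ω = y ∧ U ω = u ∧ Z ω = z) * pr p (fun ω => Y ω = y) =
      pr p (fun ω => X ω = x ∧ Y ω = y ∧ U ω = u) * pr p (fun ω => Y ω = y ∧ Z ω = z) := by
    intro x
    rcases eq_or_lt_of_le (pr_nonneg hp (fun ω => X ω = x ∧ Y ω = y)) with hG | hG
    · have hA : pr p (fun ω => X ω = x ∧ Y ω = y ∧ U ω = u ∧ Z ω = z) = 0 :=
        le_antisymm (hG ▸ pr_mono hp fun ω h => ⟨h.1, h.2.1⟩) (pr_nonneg hp _)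
      have hB : pr p (fun ω => X ω = x ∧ Y ω = y ∧ U ω = u) = 0 :=
        le_antisymm (hG ▸ pr_mono hp fun ω h => ⟨h.1, h.2.1⟩) (pr_nonneg hp _)
      rw [hA, hB]; ring
    · apply mul_right_cancel₀ (ne_of_gt hG)
      linear_combination pr p (fun ω => Y ω = y) * hMU x y u z +
        pr p (fun ω => X ω = x ∧ Y ω = y ∧ U ω = u) * hMX x y z
  have sA : pr p (fun ω => Y ω = y ∧ U ω = u ∧ Z ω = z) =
      ∑ x, pr p (fun ω => X ω = x ∧ Y ω = y ∧ U ω = u ∧ Z ω = z) := by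
    rw [pr_split p _ X]
    exact Finset.sum_congr rfl fun x _ => pr_congr fun ω => by tauto
  have sB : pr p (fun ω => Y ω = y ∧ U ω = u) =
      ∑ x, pr p (fun ω => X ω = x ∧ Y ω = y ∧ U ω = u) := by
    rw [pr_split p _ X]
    exact Finset.sum_congr rfl fun x _ => pr_congr fun ω => by tauto
  rw [sA, sB, Finset.sum_mul, Finset.sum_mul]
  exact Finset.sum_congr rfl fun x _ => step x

end derive

/-- If U - (X,Y) - Z and X - Y - Z are Markov chains then
I(X,Y; U|Z) = I(X,Y; U) - I(Z; U) ≥ I(X; U|Y). -/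
theorem stmt_8 {Ω 𝒳 𝒴 𝒵 𝒰 : Type*} [Fintype Ω] [Fintype 𝒳] [Fintype 𝒴] [Fintype 𝒵]
    [Fintype 𝒰]
    (p : Ω → ℝ) (hp : ∀ ω, 0 ≤ p ω) (hsum : ∑ ω, p ω = 1)
    (X : Ω → 𝒳) (Y : Ω → 𝒴) (Z : Ω → 𝒵) (U : Ω → 𝒰)
    (hmarkovU : ∀ u x y z,
      pr p (fun ω => U ω = u ∧ X ω = x ∧ Y ω = y ∧ Z ω = z) *
        pr p (fun ω => X ω = x ∧ Y ω = y) =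
      pr p (fun ω => U ω = u ∧ X ω = x ∧ Y ω = y) *
        pr p (fun ω => X ω = x ∧ Y ω = y ∧ Z ω = z))
    (hmarkovX : ∀ x y z,
      pr p (fun ω => X ω = x ∧ Y ω = y ∧ Z ω = z) * pr p (fun ω => Y ω = y) =
      pr p (fun ω => X ω = x ∧ Y ω = y) * pr p (fun ω => Y ω = y ∧ Z ω = z)) :
    condMI p (fun ω => (X ω, Y ω)) U Z =
        mutI p (fun ω => (X ω, Y ω)) U - mutI p Z U ∧
      condMI p (fun ω => (X ω, Y ω)) U Z ≥ condMI p X U Y := by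
  have hMU : ∀ x y u z,
      pr p (fun ω => X ω = x ∧ Y ω = y ∧ U ω = u ∧ Z ω = z) *
        pr p (fun ω => X ω = x ∧ Y ω = y) =
      pr p (fun ω => X ω = x ∧ Y ω = y ∧ U ω = u) *
        pr p (fun ω => X ω = x ∧ Y ω = y ∧ Z ω = z) := by
    intro x y u z
    have e1 : pr p (fun ω => X ω = x ∧ Y ω = y ∧ U ω = u ∧ Z ω = z) =
        pr p (fun ω => U ω = u ∧ X ω = x ∧ Y ω = y ∧ Z ω = z) := pr_congr fun ω => by tauto
    have e2 : pr p (fun ω => X ω = x ∧ Y ω = y ∧ U ω = u) =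
        pr p (fun ω => U ω = u ∧ X ω = x ∧ Y ω = y) := pr_congr fun ω => by tauto
    rw [e1, e2]; exact hmarkovU u x y z
  have hM := markov_derive X Y Z U hp hMU hmarkovX
  have h1 : condMI p (fun ω => (X ω, Y ω)) U Z =
      mutI p (fun ω => (X ω, Y ω)) U - mutI p Z U := by
    rw [eq_sub_iff_add_eq, expand_condMI_pair p X Y Z U, expand_mutI_ZU_quad p X Y Z U,
      expand_mutI_pair p X Y Z U]
    rw [← Finset.sum_add_distrib]
    refine Finset.sum_congr rfl fun x _ => ?_
    rw [← Finset.sum_add_distrib]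
    refine Finset.sum_congr rfl fun y _ => ?_
    rw [← Finset.sum_add_distrib]
    refine Finset.sum_congr rfl fun u _ => ?_
    rw [← Finset.sum_add_distrib]
    exact Finset.sum_congr rfl fun z _ => pointwise1 X Y Z U hp x y u z (hMU x y u z)
  have hchain : mutI p (fun ω => (X ω, Y ω)) U = condMI p X U Y + mutI p Y U := by
    rw [expand_mutI_pair3 X Y U p, expand_condMI_XUY p X Y U, expand_mutI_YU_triple p X Y U]
    rw [← Finset.sum_add_distrib]
    refine Finset.sum_congr rfl fun x _ => ?_
    rw [← Finset.sum_add_distrib]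
    refine Finset.sum_congr rfl fun y _ => ?_
    rw [← Finset.sum_add_distrib]
    exact Finset.sum_congr rfl fun u _ => (pointwise_chain X Y U hp x y u).symm
  have hdpi : mutI p Z U ≤ mutI p Y U := by
    rw [← sub_nonneg, expand_mutI_YU_z p Y Z U, expand_mutI_ZU_y p Y Z U]
    have e0 : (0:ℝ) = ∑ y, ∑ u, ∑ z,
        (pr p (fun ω => Y ω = y ∧ U ω = u ∧ Z ω = z) -
          pr p (fun ω => Y ω = y ∧ Z ω = z) * pr p (fun ω => U ω = u ∧ Z ω = z) /
            pr p (fun ω => Z ω = z)) / Real.log 2 := by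
      simp only [← Finset.sum_div, Finset.sum_sub_distrib]
      rw [sum_one3 Y Z U hsum, sum_ratio Y Z U hp hsum]
      simp
    calc (0:ℝ) ≤ ∑ y, ∑ u, ∑ z,
        (pr p (fun ω => Y ω = y ∧ U ω = u ∧ Z ω = z) *
            Real.logb 2 (pr p (fun ω => Y ω = y ∧ U ω = u) /
              (pr p (fun ω => Y ω = y) * pr p (fun ω => U ω = u))) -
          pr p (fun ω => Y ω = y ∧ U ω = u ∧ Z ω = z) *
            Real.logb 2 (pr p (fun ω => U ω = u ∧ Z ω = z) /
              (pr p (fun ω => Z ω = z) * pr p (fun ω => U ω = u)))) := by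
          rw [e0]
          refine Finset.sum_le_sum fun y _ => Finset.sum_le_sum fun u _ =>
            Finset.sum_le_sum fun z _ => ?_
          exact pointwise_dpi Y Z U hp y u z (hM y u z)
      _ = _ := by simp only [Finset.sum_sub_distrib]
  refine ⟨h1, ?_⟩
  rw [h1, hchain]
  linarith
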